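/- Let p be an odd prime, V = (Z/p²Z)², and G̃ ≤ GL₂(Z/p²Z) generated by σ = [[1+p,1],[2p,1+p]] and h = [[1+p,0],[0,1-p]]. Then H¹_loc(G̃, V) ≠ 0. -/
import Mathlib

open Matrix

section

variable {N : ℕ}

/-- The natural action of `GL₂(ZMod N)` on `(ZMod N)²`. -/
def glAct (γ : GL (Fin 2) (ZMod N)) (v : Fin 2 → ZMod N) : Fin 2 → ZMod N :=
  (γ : Matrix (Fin 2) (Fin 2) (ZMod N)).mulVec v

/-- `Z` is a 1-cocycle on the subgroup `G` with values in `(ZMod N)²`. -/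
def IsCocycle (G : Subgroup (GL (Fin 2) (ZMod N))) (Z : G → (Fin 2 → ZMod N)) : Prop :=
  ∀ a b : G, Z (a * b) = glAct (a : GL (Fin 2) (ZMod N)) (Z b) + Z a

/-- `Z` satisfies the local conditions: each value `Z a` is in the image of `a - Id`. -/
def SatisfiesLocalConditions (G : Subgroup (GL (Fin 2) (ZMod N)))
    (Z : G → (Fin 2 → ZMod N)) : Prop :=
  ∀ a : G, ∃ v : Fin 2 → ZMod N, Z a = glAct (a : GL (Fin 2) (ZMod N)) v - v

/-- `Z` is a 1-coboundary. -/
def IsCoboundary (G : Subgroup (GL (Fin 2) (ZMod N)))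
    (Z : G → (Fin 2 → ZMod N)) : Prop :=
  ∃ v : Fin 2 → ZMod N, ∀ a : G, Z a = glAct (a : GL (Fin 2) (ZMod N)) v - v

end

def GoodMat (p : ℕ) (M : Matrix (Fin 2) (Fin 2) (ZMod (p^2))) : Prop :=
  (∃ a, M 0 0 = 1 + p * a) ∧ (∃ d, M 1 1 = 1 + p * d) ∧ M 1 0 = 2 * p * M 0 1

lemma pp_zero (p : ℕ) : (p : ZMod (p^2)) * p = 0 := by
  rw [← Nat.cast_mul, ← pow_two]
  exact ZMod.natCast_self _

lemma good_one (p : ℕ) : GoodMat p 1 := by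
  refine ⟨⟨0, ?_⟩, ⟨0, ?_⟩, ?_⟩ <;> simp [Matrix.one_apply]

lemma good_mul (p : ℕ) {M M' : Matrix (Fin 2) (Fin 2) (ZMod (p^2))}
    (hM : GoodMat p M) (hM' : GoodMat p M') : GoodMat p (M * M') := by
  obtain ⟨⟨a, ha⟩, ⟨d, hd⟩, h10⟩ := hM
  obtain ⟨⟨a', ha'⟩, ⟨d', hd'⟩, h10'⟩ := hM'
  have hpp := pp_zero p
  refine ⟨⟨a + a' + 2 * M 0 1 * M' 0 1, ?_⟩, ⟨d + d' + 2 * M 0 1 * M' 0 1, ?_⟩, ?_⟩ <;>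
    simp only [Matrix.mul_apply, Fin.sum_univ_two, ha, hd, ha', hd', h10, h10']
  · linear_combination (a * a') * hpp
  · linear_combination (d * d') * hpp
  · linear_combination (2 * M 0 1 * (a' - d') + 2 * (d - a) * M' 0 1) * hpp

lemma good_pow (p : ℕ) {M : Matrix (Fin 2) (Fin 2) (ZMod (p^2))}
    (hM : GoodMat p M) : ∀ n, GoodMat p (M ^ n)
  | 0 => by simpa using good_one p
  | n + 1 => by rw [pow_succ]; exact good_mul p (good_pow p hM n) hM

lemma good_inv (p : ℕ) [Fact p.Prime] {γ : GL (Fin 2) (ZMod (p^2))}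
    (hγ : GoodMat p (γ : Matrix (Fin 2) (Fin 2) (ZMod (p^2)))) :
    GoodMat p ((γ⁻¹ : GL (Fin 2) (ZMod (p^2))) : Matrix (Fin 2) (Fin 2) (ZMod (p^2))) := by
  have hpos : 0 < orderOf γ := orderOf_pos γ
  have h1 : γ * γ ^ (orderOf γ - 1) = 1 := by
    rw [← pow_succ', Nat.sub_add_cancel hpos, pow_orderOf_eq_one]
  have h2 : γ⁻¹ = γ ^ (orderOf γ - 1) := inv_eq_of_mul_eq_one_right h1
  rw [h2, Units.val_pow_eq_pow_val]
  exact good_pow p hγ _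

lemma mulVec2 {R : Type*} [CommRing R] (M : Matrix (Fin 2) (Fin 2) R) (v : Fin 2 → R)
    (i : Fin 2) : M.mulVec v i = M i 0 * v 0 + M i 1 * v 1 := by
  simp [Matrix.mulVec, dotProduct, Fin.sum_univ_two]

/-- Let `p` be an odd prime and `G̃ ≤ GL₂(ZMod p²)` generated by
`σ = [[1+p,1],[2p,1+p]]` and `h = [[1+p,0],[0,1-p]]`. Then
`H¹_loc(G̃, (ZMod p²)²) ≠ 0`: there is a cocycle satisfying the local
conditions which is not a coboundary. -/
theorem h1loc_nonzero_index_two_case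
    (p : ℕ) (hp : p.Prime) (hodd : Odd p)
    (σ h : GL (Fin 2) (ZMod (p ^ 2)))
    (hσ : (σ : Matrix (Fin 2) (Fin 2) (ZMod (p ^ 2))) =
      !![1 + (p : ZMod (p ^ 2)), 1; 2 * (p : ZMod (p ^ 2)), 1 + (p : ZMod (p ^ 2))])
    (hh : (h : Matrix (Fin 2) (Fin 2) (ZMod (p ^ 2))) =
      !![1 + (p : ZMod (p ^ 2)), 0; 0, 1 - (p : ZMod (p ^ 2))]) :
    ∃ Z : (Subgroup.closure ({σ, h} : Set (GL (Fin 2) (ZMod (p ^ 2))))) →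
        (Fin 2 → ZMod (p ^ 2)),
      IsCocycle _ Z ∧ SatisfiesLocalConditions _ Z ∧ ¬ IsCoboundary _ Z := by
  haveI : Fact p.Prime := ⟨hp⟩
  have hpp := pp_zero p
  -- 2 is a unit
  obtain ⟨c, hc⟩ : ∃ c : ZMod (p^2), 2 * c = 1 := by
    have hnd : ¬ (2 ∣ p) := by obtain ⟨m, hm⟩ := hodd; omega
    have h2 : IsUnit ((2 : ℕ) : ZMod (p^2)) := by
      rw [ZMod.isUnit_iff_coprime]
      exact (Nat.Prime.coprime_iff_not_dvd Nat.prime_two |>.mpr hnd).pow_right 2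
    obtain ⟨u, hu⟩ := h2
    exact ⟨(u⁻¹ : _), by rw [show ((2:ZMod (p^2)) = (u : ZMod (p^2))) by exact_mod_cast hu.symm]; exact u.mul_inv⟩
  -- entries of σ and h
  have hσ00 : (σ : Matrix (Fin 2) (Fin 2) (ZMod (p^2))) 0 0 = 1 + p * 1 := by rw [hσ]; simp
  have hσ01 : (σ : Matrix (Fin 2) (Fin 2) (ZMod (p^2))) 0 1 = 1 := by rw [hσ]; simp
  have hσ10 : (σ : Matrix (Fin 2) (Fin 2) (ZMod (p^2))) 1 0 = 2 * p := by rw [hσ]; simp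
  have hσ11 : (σ : Matrix (Fin 2) (Fin 2) (ZMod (p^2))) 1 1 = 1 + p * 1 := by rw [hσ]; simp
  have hh00 : (h : Matrix (Fin 2) (Fin 2) (ZMod (p^2))) 0 0 = 1 + p * 1 := by rw [hh]; simp
  have hh01 : (h : Matrix (Fin 2) (Fin 2) (ZMod (p^2))) 0 1 = 0 := by rw [hh]; simp
  have hh10 : (h : Matrix (Fin 2) (Fin 2) (ZMod (p^2))) 1 0 = 0 := by rw [hh]; simp
  have hh11 : (h : Matrix (Fin 2) (Fin 2) (ZMod (p^2))) 1 1 = 1 + p * (-1) := by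
    have e : (!![1 + (p : ZMod (p ^ 2)), 0; 0, 1 - (p : ZMod (p ^ 2))]) 1 1 = 1 - p := by simp
    rw [hh, e]; ring
  -- every element of the closure is a good matrix
  have key : ∀ γ : GL (Fin 2) (ZMod (p^2)), γ ∈ Subgroup.closure {σ, h} →
      GoodMat p (γ : Matrix (Fin 2) (Fin 2) (ZMod (p^2))) := by
    intro γ hγ
    refine Subgroup.closure_induction ?_ ?_ ?_ ?_ hγ
    · rintro x (rfl | rfl)
      · exact ⟨⟨1, hσ00⟩, ⟨1, hσ11⟩, by rw [hσ10, hσ01]; ring⟩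
      · exact ⟨⟨1, hh00⟩, ⟨-1, hh11⟩, by rw [hh10, hh01]; ring⟩
    · rw [Units.val_one]; exact good_one p
    · intro x y _ _ hx hy; rw [Units.val_mul]; exact good_mul p hx hy
    · intro x _ hx; exact good_inv p hx
  set ent : (Subgroup.closure ({σ, h} : Set (GL (Fin 2) (ZMod (p ^ 2))))) → ZMod (p^2) :=
    fun γ => ((γ : GL (Fin 2) (ZMod (p ^ 2))) : Matrix (Fin 2) (Fin 2) (ZMod (p ^ 2))) 0 1
    with hent
  refine ⟨fun γ => ![c * (p * ent γ ^ 2), p * ent γ], ?_, ?_, ?_⟩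
  · -- cocycle
    intro a b
    obtain ⟨⟨x, hx⟩, ⟨w, hw⟩, h10a⟩ := key a a.2
    obtain ⟨⟨x', hx'⟩, ⟨w', hw'⟩, h10b⟩ := key b b.2
    have hab : ((((a * b : _) : GL (Fin 2) (ZMod (p ^ 2)))) : Matrix (Fin 2) (Fin 2) (ZMod (p ^ 2)))
        = ((a : GL (Fin 2) (ZMod (p ^ 2))) : Matrix (Fin 2) (Fin 2) (ZMod (p ^ 2)))
          * ((b : GL (Fin 2) (ZMod (p ^ 2))) : Matrix (Fin 2) (Fin 2) (ZMod (p ^ 2))) := by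
      push_cast [Units.val_mul]; rfl
    funext i
    fin_cases i <;>
      simp only [glAct, Pi.add_apply, mulVec2, hent, hab, Matrix.mul_apply, Fin.sum_univ_two,
        Fin.zero_eta, Fin.mk_one, Matrix.cons_val_zero, Matrix.cons_val_one, Matrix.head_cons]
    · rw [hx, hw']
      try rw [hx]
      set u := ((a : GL (Fin 2) (ZMod (p ^ 2))) : Matrix (Fin 2) (Fin 2) (ZMod (p ^ 2))) 0 1
      set u' := ((b : GL (Fin 2) (ZMod (p ^ 2))) : Matrix (Fin 2) (Fin 2) (ZMod (p ^ 2))) 0 1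
      linear_combination (c*(2*(u+u')*(x*u'+u*w') + p*(x*u'+u*w')^2) - c*x*u'^2) * hpp
        + (p*u*u') * hc
    · rw [hx, hw', h10a, hw]
      set u := ((a : GL (Fin 2) (ZMod (p ^ 2))) : Matrix (Fin 2) (Fin 2) (ZMod (p ^ 2))) 0 1
      set u' := ((b : GL (Fin 2) (ZMod (p ^ 2))) : Matrix (Fin 2) (Fin 2) (ZMod (p ^ 2))) 0 1
      linear_combination ((x*u'+u*w') - 2*c*u*u'^2 - w*u') * hpp
  · -- local conditions
    intro γ
    obtain ⟨⟨a, ha⟩, ⟨d, hd⟩, h10⟩ := key γ γ.2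
    set y := ent γ with hy
    by_cases hdvd : p ∣ y.val
    · obtain ⟨k, hk⟩ := hdvd
      have hyps : y = p * (k : ZMod (p^2)) := by
        have hval : ((y.val : ℕ) : ZMod (p^2)) = y := ZMod.natCast_rightInverse y
        rw [← hval, hk]; push_cast; ring
      refine ⟨0, ?_⟩
      funext i
      fin_cases i <;>
        simp only [glAct, Pi.sub_apply, Pi.zero_apply, mulVec2, Fin.zero_eta, Fin.mk_one,
          Matrix.cons_val_zero, Matrix.cons_val_one, Matrix.head_cons, mul_zero, add_zero,
          sub_zero, zero_add]
      · rw [← hy, hyps]; linear_combination (c*p*(k : ZMod (p^2))^2) * hpp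
      · rw [← hy, hyps]; linear_combination ((k : ZMod (p^2))) * hpp
    · have hu : IsUnit y := by
        have h1 : ((y.val : ℕ) : ZMod (p^2)) = y := ZMod.natCast_rightInverse y
        rw [← h1, ZMod.isUnit_iff_coprime]
        exact ((Nat.Prime.coprime_iff_not_dvd hp).mpr hdvd).symm.pow_right 2
      obtain ⟨t, hyt⟩ : ∃ t, y * t = 1 := by
        obtain ⟨u, hu'⟩ := hu
        exact ⟨(u⁻¹ : _), by rw [← hu']; exact u.mul_inv⟩
      refine ⟨![c, t * (c * (p * y^2 - p * a))], ?_⟩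
      funext i
      fin_cases i <;>
        simp only [glAct, Pi.sub_apply, mulVec2, Fin.zero_eta, Fin.mk_one,
          Matrix.cons_val_zero, Matrix.cons_val_one, Matrix.head_cons]
      · rw [← hy, ha]
        linear_combination (-(c * (p * y^2 - p * a))) * hyt
      · have h10y : ((γ : GL (Fin 2) (ZMod (p ^ 2))) : Matrix (Fin 2) (Fin 2) (ZMod (p ^ 2))) 1 0
            = 2 * p * y := h10
        rw [← hy, hd, h10y]
        linear_combination (d*t*c*(y^2 - a)) * hpp
          + (d*c*(y*a*t - 2*y^2*t + y^2 - y^3*t + 2*a*t - a)) * hpp + (-(p*y)) * hc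
          + ((1 + p*d)*(c*(p*y^2 - p*a)) - (c*(p*y^2-p*a))) * hyt
  · -- not a coboundary
    rintro ⟨v, hv⟩
    have hσmem : σ ∈ Subgroup.closure ({σ, h} : Set (GL (Fin 2) (ZMod (p ^ 2)))) :=
      Subgroup.subset_closure (by left; rfl)
    have hhmem : h ∈ Subgroup.closure ({σ, h} : Set (GL (Fin 2) (ZMod (p ^ 2)))) :=
      Subgroup.subset_closure (by right; rfl)
    have eh0 := congrFun (hv ⟨h, hhmem⟩) 0
    have eh1 := congrFun (hv ⟨h, hhmem⟩) 1
    have es1 := congrFun (hv ⟨σ, hσmem⟩) 1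
    simp only [glAct, Pi.sub_apply, mulVec2, Matrix.cons_val_zero, Matrix.cons_val_one,
      Matrix.head_cons, hent] at eh0 eh1 es1
    rw [hh00, hh01] at eh0
    rw [hh10, hh11, hh01] at eh1
    rw [hσ10, hσ11, hσ01] at es1
    -- eh0 : c * (p * 0^2) = (1+p*1) * v 0 + 0 * v 1 - v 0
    -- eh1 : p * 0 = 0 * v 0 + (1+p*(-1)) * v 1 - v 1
    -- es1 : p * 1 = 2*p * v 0 + (1+p*1) * v 1 - v 1
    have hp0 : (p : ZMod (p^2)) = 0 := by linear_combination es1 - 2 * eh0 + eh1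
    have : (p : ℕ) % (p^2) = 0 := by
      have := (ZMod.natCast_eq_zero_iff p (p^2)).mp hp0
      omega
    have hlt : p < p^2 := by nlinarith [hp.two_le]
    rw [Nat.mod_eq_of_lt hlt] at this
    exact hp.ne_zero this
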